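/- McDiarmid's bounded differences inequality: if X_1,...,X_n are independent random variables and f is a function such that changing the i-th coordinate changes the value of f by at most c_i, then for any ε > 0, P(|f(X_1,...,X_n) − E[f(X_1,...,X_n)]| > ε) < 2·exp(−ε² / ∑_i c_i²). -/

import Mathlib

open MeasureTheory

open Real

universe u

lemma mcd_analytic_key {p : ℝ} (hp0 : 0 ≤ p) (hp1 : p ≤ 1) (L : ℝ) :
    (1 - p) * Real.exp (-(p * L)) + p * Real.exp ((1 - p) * L) ≤ Real.exp (L ^ 2 / 8) := by
  set d : ℝ → ℝ := fun x => 1 - p + p * Real.exp x with hd_def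
  have hd : ∀ x, 0 < d x := by
    intro x
    rcases eq_or_lt_of_le hp0 with h | h
    · simp [hd_def, ← h]
    · have := mul_pos h (Real.exp_pos x)
      simp only [hd_def]; linarith
  set u : ℝ → ℝ := fun x => p * Real.exp x / d x with hu_def
  set g : ℝ → ℝ := fun x => x / 4 + p - u x with hg_def
  set h : ℝ → ℝ := fun x => x ^ 2 / 8 + p * x - Real.log (d x) with hh_def
  have hdd : ∀ x, HasDerivAt d (p * Real.exp x) x := fun x =>
    ((Real.hasDerivAt_exp x).const_mul p).const_add (1 - p)
  have hdh : ∀ x, HasDerivAt h (g x) x := by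
    intro x
    have h1 : HasDerivAt (fun y : ℝ => y ^ 2 / 8 + p * y) (x / 4 + p) x := by
      have := ((hasDerivAt_pow 2 x).div_const 8).add ((hasDerivAt_id x).const_mul p)
      refine this.congr_deriv ?_
      norm_num
      ring
    have h2 : HasDerivAt (fun y => Real.log (d y)) (u x) x := by
      have := (hdd x).log (hd x).ne'
      simpa [hu_def] using this
    exact h1.sub h2
  have hdg : ∀ x, HasDerivAt g (1 / 4 - p * Real.exp x * (1 - p) / (d x) ^ 2) x := by
    intro x
    have h2 : HasDerivAt u
        ((p * Real.exp x * d x - p * Real.exp x * (p * Real.exp x)) / (d x) ^ 2) x :=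
      ((Real.hasDerivAt_exp x).const_mul p).div (hdd x) (hd x).ne'
    have h3 : HasDerivAt u (p * Real.exp x * (1 - p) / (d x) ^ 2) x := by
      convert h2 using 1
      simp only [hd_def]; ring
    have h4 : HasDerivAt (fun y : ℝ => y / 4 + p) (1 / 4) x := by
      simpa using ((hasDerivAt_id x).div_const 4).add_const p
    exact h4.sub h3
  have hg' : ∀ x, 0 ≤ 1 / 4 - p * Real.exp x * (1 - p) / (d x) ^ 2 := by
    intro x
    have hd2 : 0 < (d x) ^ 2 := pow_pos (hd x) 2
    have : p * Real.exp x * (1 - p) / (d x) ^ 2 ≤ 1 / 4 := by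
      rw [div_le_iff₀ hd2]
      have hsq : 0 ≤ ((1 - p) - p * Real.exp x) ^ 2 := sq_nonneg _
      simp only [hd_def]
      nlinarith [hsq]
    linarith
  have hgmono : Monotone g := by
    apply monotone_of_deriv_nonneg (fun x => (hdg x).differentiableAt)
    intro x
    rw [(hdg x).deriv]
    exact hg' x
  have hg0 : g 0 = 0 := by
    simp [hg_def, hu_def, hd_def, Real.exp_zero]
  have hh0 : h 0 = 0 := by
    simp [hh_def, hd_def, Real.exp_zero]
  have hdiffh : Differentiable ℝ h := fun x => (hdh x).differentiableAt
  have hmono : MonotoneOn h (Set.Ici 0) := by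
    apply monotoneOn_of_deriv_nonneg (convex_Ici 0) hdiffh.continuous.continuousOn
      (fun x _ => (hdiffh x).differentiableWithinAt)
    intro x hx
    rw [interior_Ici] at hx
    rw [(hdh x).deriv]
    have := hgmono (le_of_lt hx)
    rw [hg0] at this
    exact this
  have hanti : AntitoneOn h (Set.Iic 0) := by
    apply antitoneOn_of_deriv_nonpos (convex_Iic 0) hdiffh.continuous.continuousOn
      (fun x _ => (hdiffh x).differentiableWithinAt)
    intro x hx
    rw [interior_Iic] at hx
    rw [(hdh x).deriv]
    have := hgmono (le_of_lt hx)
    rw [hg0] at this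
    exact this
  have hhL : 0 ≤ h L := by
    rcases le_total 0 L with hL | hL
    · have := hmono Set.self_mem_Ici hL hL
      rwa [hh0] at this
    · have := hanti hL Set.self_mem_Iic hL
      rwa [hh0] at this
  have hlog : Real.log (d L) ≤ L ^ 2 / 8 + p * L := by
    simp only [hh_def] at hhL; linarith
  have hdL : d L ≤ Real.exp (L ^ 2 / 8 + p * L) :=
    (Real.log_le_iff_le_exp (hd L)).mp hlog
  have hlhs : (1 - p) * Real.exp (-(p * L)) + p * Real.exp ((1 - p) * L)
      = Real.exp (-(p * L)) * d L := by
    simp only [hd_def]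
    rw [show (1 - p) * L = -(p * L) + L by ring, Real.exp_add]
    ring
  rw [hlhs]
  calc Real.exp (-(p * L)) * d L ≤ Real.exp (-(p * L)) * Real.exp (L ^ 2 / 8 + p * L) :=
        mul_le_mul_of_nonneg_left hdL (Real.exp_nonneg _)
    _ = Real.exp (L ^ 2 / 8) := by rw [← Real.exp_add]; ring_nf

lemma mcd_nonempty_of_prob {α : Type*} [MeasurableSpace α] (ν : Measure α)
    [IsProbabilityMeasure ν] : Nonempty α := by
  rcases isEmpty_or_nonempty α with h | h
  · exfalso
    have h1 : ν Set.univ = 1 := measure_univ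
    rw [Set.univ_eq_empty_iff.mpr h] at h1
    simp at h1
  · exact h

lemma mcd_integrable_of_bdd {α : Type*} [MeasurableSpace α] {ν : Measure α}
    [IsFiniteMeasure ν] {φ : α → ℝ} (hm : Measurable φ) (C : ℝ) (hC : ∀ x, |φ x| ≤ C) :
    Integrable φ ν :=
  (integrable_const C).mono' hm.aestronglyMeasurable
    (Filter.Eventually.of_forall (by simpa using hC))

lemma mcd_hoeffding_mgf {α : Type*} [MeasurableSpace α] (ν : Measure α) [IsProbabilityMeasure ν]
    (g : α → ℝ) (hg : Measurable g) (c : ℝ) (hosc : ∀ x y, |g x - g y| ≤ c)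
    (hmean : ∫ x, g x ∂ν = 0) (t : ℝ) :
    ∫ x, Real.exp (t * g x) ∂ν ≤ Real.exp (t ^ 2 * c ^ 2 / 8) := by
  obtain ⟨x₀⟩ := mcd_nonempty_of_prob ν
  have hc0 : 0 ≤ c := by have := hosc x₀ x₀; simpa using this
  have hgb : ∀ x, |g x| ≤ |g x₀| + c := by
    intro x
    have h1 := hosc x x₀
    have h2 : |g x| ≤ |g x - g x₀| + |g x₀| := by
      have := abs_add_le (g x - g x₀) (g x₀); simpa using this
    linarith
  have hgint : Integrable g ν := mcd_integrable_of_bdd hg (|g x₀| + c) hgb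
  -- bounds
  set a := sInf (Set.range g) with ha_def
  have hbdd : BddBelow (Set.range g) := by
    refine ⟨g x₀ - c, ?_⟩
    rintro r ⟨y, rfl⟩
    have := hosc x₀ y
    have := abs_le.mp this
    linarith [this.2]
  have ha_le : ∀ x, a ≤ g x := fun x => csInf_le hbdd ⟨x, rfl⟩
  have hle_b : ∀ x, g x ≤ a + c := by
    intro x
    have : g x - c ≤ a := by
      haveI : Nonempty α := ⟨x₀⟩
      apply le_csInf (Set.range_nonempty g)
      rintro r ⟨y, rfl⟩
      have := abs_le.mp (hosc x y)
      linarith [this.1]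
    linarith
  have ha0 : a ≤ 0 := by
    have h1 : ∫ _ : α, a ∂ν ≤ ∫ x, g x ∂ν := integral_mono (integrable_const a) hgint ha_le
    rw [hmean, integral_const, probReal_univ] at h1
    simpa using h1
  have hb0 : 0 ≤ a + c := by
    have h1 : ∫ x, g x ∂ν ≤ ∫ _ : α, (a + c) ∂ν := integral_mono hgint (integrable_const _) hle_b
    rw [hmean, integral_const, probReal_univ] at h1
    simpa using h1
  rcases eq_or_lt_of_le hc0 with hc | hc
  · -- c = 0
    have haz : a = 0 := le_antisymm ha0 (by linarith)
    have hgz : ∀ x, g x = 0 := fun x =>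
      le_antisymm (by have := hle_b x; rw [haz, ← hc] at this; simpa using this)
        (by have := ha_le x; rwa [haz] at this)
    have : ∀ x, Real.exp (t * g x) = 1 := fun x => by rw [hgz x]; simp
    simp only [this]
    rw [integral_const, probReal_univ]
    simp [← hc, Real.exp_nonneg]
  · -- c > 0
    set b := a + c with hb_def
    set p := -a / c with hp_def
    set L := t * c with hL_def
    have hp0 : 0 ≤ p := div_nonneg (by linarith) hc0
    have hp1 : p ≤ 1 := by
      rw [hp_def, div_le_one hc]; linarith
    set K1 := (b * Real.exp (t * a) - a * Real.exp (t * b)) / c with hK1_def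
    set K2 := (Real.exp (t * b) - Real.exp (t * a)) / c with hK2_def
    have key : ∀ x, Real.exp (t * g x) ≤ K1 + g x * K2 := by
      intro x
      have hθ0 : 0 ≤ (b - g x) / c := div_nonneg (by linarith [hle_b x]) hc0
      have hη0 : 0 ≤ (g x - a) / c := div_nonneg (by linarith [ha_le x]) hc0
      have hsum : (b - g x) / c + (g x - a) / c = 1 := by
        field_simp
        rw [hb_def]; ring
      have harg : ((b - g x) / c) • (t * a) + ((g x - a) / c) • (t * b) = t * g x := by
        simp only [smul_eq_mul]
        field_simp
        ring
      calc Real.exp (t * g x) = Real.exp (((b - g x) / c) • (t * a) + ((g x - a) / c) • (t * b)) := by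
            rw [harg]
        _ ≤ ((b - g x) / c) • Real.exp (t * a) + ((g x - a) / c) • Real.exp (t * b) :=
            convexOn_exp.2 (Set.mem_univ _) (Set.mem_univ _) hθ0 hη0 hsum
        _ = K1 + g x * K2 := by
            simp only [smul_eq_mul, hK1_def, hK2_def]
            field_simp
            ring
    have hexpint : Integrable (fun x => Real.exp (t * g x)) ν := by
      apply mcd_integrable_of_bdd (by fun_prop) (Real.exp (|t| * (|g x₀| + c)))
      intro x
      rw [abs_of_nonneg (Real.exp_nonneg _)]
      apply Real.exp_le_exp.mpr
      calc t * g x ≤ |t * g x| := le_abs_self _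
        _ = |t| * |g x| := abs_mul _ _
        _ ≤ |t| * (|g x₀| + c) := mul_le_mul_of_nonneg_left (hgb x) (abs_nonneg t)
    have h1 : ∫ x, Real.exp (t * g x) ∂ν ≤ ∫ x, (K1 + g x * K2) ∂ν :=
      integral_mono hexpint ((integrable_const K1).add (hgint.mul_const K2))
        (fun x => key x)
    have h2 : ∫ x, (K1 + g x * K2) ∂ν = K1 := by
      rw [integral_add (integrable_const K1) (hgint.mul_const K2), integral_const, probReal_univ,
        integral_mul_const, hmean]
      simp
    have e1 : -(p * L) = t * a := by
      rw [hp_def, hL_def]; field_simp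
    have e2 : (1 - p) * L = t * b := by
      rw [hp_def, hL_def, hb_def]; field_simp; ring
    have h3 : K1 = (1 - p) * Real.exp (-(p * L)) + p * Real.exp ((1 - p) * L) := by
      rw [e1, e2, hK1_def, hp_def, hb_def]
      field_simp
      ring
    have h4 := mcd_analytic_key hp0 hp1 L
    have h5 : L ^ 2 / 8 = t ^ 2 * c ^ 2 / 8 := by rw [hL_def]; ring
    calc ∫ x, Real.exp (t * g x) ∂ν ≤ K1 := h1.trans (le_of_eq h2)
      _ ≤ Real.exp (L ^ 2 / 8) := by rw [h3]; exact h4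
      _ = Real.exp (t ^ 2 * c ^ 2 / 8) := by rw [h5]

lemma mcd_osc_bound {n : ℕ} {E : Fin n → Type*} (f : (∀ i, E i) → ℝ) (c : Fin n → ℝ)
    (hbdd : ∀ (i : Fin n) (x : ∀ j, E j) (x' : E i), |f x - f (Function.update x i x')| ≤ c i)
    (x y : ∀ i, E i) : |f x - f y| ≤ ∑ i, c i := by
  classical
  have key : ∀ s : Finset (Fin n), |f x - f (s.piecewise y x)| ≤ ∑ i ∈ s, c i := by
    intro s
    induction s using Finset.induction_on with
    | empty => simp
    | @insert j s hj ih =>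
      rw [Finset.piecewise_insert, Finset.sum_insert hj]
      calc |f x - f (Function.update (s.piecewise y x) j (y j))|
          ≤ |f x - f (s.piecewise y x)|
            + |f (s.piecewise y x) - f (Function.update (s.piecewise y x) j (y j))| :=
            abs_sub_le _ _ _
        _ ≤ (∑ i ∈ s, c i) + c j := add_le_add ih (hbdd j _ _)
        _ = c j + ∑ i ∈ s, c i := by ring
  have := key Finset.univ
  simpa using this

lemma mcd_insertNth_update {n : ℕ} {α : Fin (n + 1) → Type*} (q : Fin (n + 1)) (x : α q)
    (f : ∀ j, α (q.succAbove j)) (j : Fin n) (y : α (q.succAbove j)) :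
    q.insertNth x (Function.update f j y)
      = Function.update (q.insertNth x f) (q.succAbove j) y := by
  ext i
  cases i using q.succAboveCases with
  | x =>
    rw [Fin.insertNth_apply_same,
      Function.update_of_ne (Fin.succAbove_ne q j).symm, Fin.insertNth_apply_same]
  | p k =>
    rcases eq_or_ne k j with rfl | hkj
    · simp
    · rw [Fin.insertNth_apply_succAbove, Function.update_of_ne hkj,
        Function.update_of_ne (fun h => hkj (Fin.succAbove_right_injective h)),
        Fin.insertNth_apply_succAbove]

lemma mcd_mgf_pi : ∀ (n : ℕ) (E : Fin n → Type u) (inst : ∀ i, MeasurableSpace (E i))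
    (ν : ∀ i, @Measure (E i) (inst i)) (_hν : ∀ i, IsProbabilityMeasure (ν i))
    (f : (∀ i, E i) → ℝ) (_hf : Measurable f) (c : Fin n → ℝ)
    (_hbdd : ∀ (i : Fin n) (x : ∀ j, E j) (x' : E i),
      |f x - f (Function.update x i x')| ≤ c i) (t : ℝ),
    ∫ x, Real.exp (t * (f x - ∫ y, f y ∂(Measure.pi ν))) ∂(Measure.pi ν)
      ≤ Real.exp (t ^ 2 * (∑ i, c i ^ 2) / 8) := by
  intro n
  induction n with
  | zero =>
    intro E inst ν hν f hf c hbdd t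
    haveI : ∀ i, IsProbabilityMeasure (ν i) := hν
    have x₀ : ∀ i, E i := fun i => i.elim0
    have hconst : ∀ x : ∀ i, E i, f x = f x₀ := fun x => by
      congr 1; exact funext fun i => i.elim0
    have hint : ∫ y, f y ∂(Measure.pi ν) = f x₀ := by
      have h1 : (fun y => f y) = fun _ => f x₀ := funext fun y => hconst y
      rw [h1, integral_const, probReal_univ]; simp
    have h2 : (fun x => Real.exp (t * (f x - ∫ y, f y ∂(Measure.pi ν)))) = fun _ => (1 : ℝ) := by
      funext x
      rw [hint, hconst x]; simp
    rw [h2, integral_const, probReal_univ]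
    simp
  | succ n ih =>
    intro E inst ν hν f hf c hbdd t
    haveI : ∀ i, IsProbabilityMeasure (ν i) := hν
    set P := Measure.pi ν with hP_def
    have hne : ∀ i, Nonempty (E i) := fun i => mcd_nonempty_of_prob (ν i)
    obtain ⟨x₀⟩ : Nonempty (∀ i, E i) := ⟨fun i => (hne i).some⟩
    have hc0 : ∀ i, 0 ≤ c i := fun i => by
      have := hbdd i x₀ (x₀ i)
      simpa using this
    have hosc := mcd_osc_bound f c hbdd
    set M : ℝ := |f x₀| + ∑ i, c i with hM_def
    have hfb : ∀ x, |f x| ≤ M := by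
      intro x
      have h1 := hosc x x₀
      have h2 : |f x| ≤ |f x - f x₀| + |f x₀| := by
        have := abs_add_le (f x - f x₀) (f x₀); simpa using this
      rw [hM_def]; linarith
    -- the equivalence
    set e := MeasurableEquiv.piFinSuccAbove E 0 with he_def
    have hmp := measurePreserving_piFinSuccAbove ν 0
    set ν' := fun j => ν (Fin.succAbove 0 j) with hν'_def
    haveI : ∀ j, IsProbabilityMeasure (ν' j) := fun j => hν _
    set P' := Measure.pi ν' with hP'_def
    set R := (ν 0).prod P' with hR_def
    set F : E 0 × (∀ j, E (Fin.succAbove 0 j)) → ℝ := fun z => f (e.symm z) with hF_def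
    have hFm : Measurable F := hf.comp e.symm.measurable
    have hesymm : ∀ z, e.symm z = Fin.insertNth 0 z.1 z.2 := fun z => rfl
    have hFb : ∀ z, |F z| ≤ M := fun z => hfb _
    -- transport of integrals
    have htrans : ∀ (φ : (E 0 × (∀ j, E (Fin.succAbove 0 j))) → ℝ),
        ∫ x, φ (e x) ∂P = ∫ z, φ z ∂ R := fun φ =>
      hmp.integral_comp e.measurableEmbedding φ
    set m := ∫ y, f y ∂P with hm_def
    have hmb : |m| ≤ M := by
      calc |m| = ‖∫ y, f y ∂P‖ := rfl
        _ ≤ ∫ y, ‖f y‖ ∂P := norm_integral_le_integral_norm _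
        _ ≤ ∫ _, M ∂P := integral_mono
            (mcd_integrable_of_bdd hf M hfb).norm (integrable_const M) (fun y => by
              simpa using hfb y)
        _ = M := by rw [integral_const, probReal_univ]; simp
    have hmF : m = ∫ z, F z ∂ R := by
      rw [hm_def, ← htrans F]
      congr 1
      funext x
      rw [hF_def]
      simp
      exact congrArg f (e.symm_apply_apply x).symm
    -- g : integrate out coordinate 0
    set g : (∀ j, E (Fin.succAbove 0 j)) → ℝ := fun y => ∫ x0, F (x0, y) ∂(ν 0) with hg_def
    have hgsm : StronglyMeasurable g := hFm.stronglyMeasurable.integral_prod_left'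
    have hgm : Measurable g := hgsm.measurable
    have hFym : ∀ y, Measurable (fun x0 => F (x0, y)) := fun y =>
      hFm.comp (measurable_id.prodMk measurable_const)
    have hFyint : ∀ y, Integrable (fun x0 => F (x0, y)) (ν 0) := fun y =>
      mcd_integrable_of_bdd (hFym y) M (fun x0 => hFb _)
    have hgb : ∀ y, |g y| ≤ M := by
      intro y
      calc |g y| = ‖∫ x0, F (x0, y) ∂(ν 0)‖ := rfl
        _ ≤ ∫ x0, ‖F (x0, y)‖ ∂(ν 0) := norm_integral_le_integral_norm _
        _ ≤ ∫ _, M ∂(ν 0) := integral_mono (hFyint y).norm (integrable_const M)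
            (fun x0 => by simpa using hFb (x0, y))
        _ = M := by rw [integral_const, probReal_univ]; simp
    -- oscillation of F in the first variable
    have hFosc : ∀ y u v, |F (u, y) - F (v, y)| ≤ c 0 := by
      intro y u v
      rw [hF_def]
      simp only
      rw [hesymm, hesymm]
      simp only
      have h1 : (Fin.insertNth 0 v y : ∀ i, E i)
          = Function.update (Fin.insertNth 0 u y) 0 v := by
        rw [Fin.update_insertNth]
      rw [h1]
      exact hbdd 0 _ _
    -- inner Hoeffding bound
    have hmean' : ∀ y, ∫ x0, (F (x0, y) - g y) ∂(ν 0) = 0 := by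
      intro y
      rw [integral_sub (hFyint y) (integrable_const _), integral_const, probReal_univ]
      simp [hg_def]
    have inner : ∀ y, ∫ x0, Real.exp (t * (F (x0, y) - g y)) ∂(ν 0)
        ≤ Real.exp (t ^ 2 * (c 0) ^ 2 / 8) := by
      intro y
      apply mcd_hoeffding_mgf (ν 0) _ ((hFym y).sub measurable_const) (c 0)
        (fun u v => by
          have := hFosc y u v
          calc |F (u, y) - g y - (F (v, y) - g y)| = |F (u, y) - F (v, y)| := by ring_nf
            _ ≤ c 0 := this)
        (hmean' y) t
    -- bounded differences of g
    have hgbdd : ∀ (j : Fin n) (y : ∀ k, E (Fin.succAbove 0 k)) (x' : E (Fin.succAbove 0 j)),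
        |g y - g (Function.update y j x')| ≤ c (Fin.succAbove 0 j) := by
      intro j y x'
      have hdiff : ∀ x0, F (x0, y) - F (x0, Function.update y j x')
          = f (e.symm (x0, y)) - f (Function.update (e.symm (x0, y)) (Fin.succAbove 0 j) x') := by
        intro x0
        rw [hF_def]
        simp only
        rw [hesymm, hesymm]
        simp only
        rw [mcd_insertNth_update]
      have h1 : g y - g (Function.update y j x')
          = ∫ x0, (F (x0, y) - F (x0, Function.update y j x')) ∂(ν 0) := by
        rw [integral_sub (hFyint y) (hFyint _), hg_def]
      rw [h1]
      calc |∫ x0, (F (x0, y) - F (x0, Function.update y j x')) ∂(ν 0)|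
          ≤ ∫ x0, |F (x0, y) - F (x0, Function.update y j x')| ∂(ν 0) := by
            have := norm_integral_le_integral_norm
              (fun x0 => F (x0, y) - F (x0, Function.update y j x')) (μ := ν 0)
            simpa using this
        _ ≤ ∫ _, c (Fin.succAbove 0 j) ∂(ν 0) := integral_mono
            (((hFyint y).sub (hFyint _)).abs) (integrable_const _)
            (fun x0 => by rw [hdiff x0]; exact hbdd _ _ _)
        _ = c (Fin.succAbove 0 j) := by rw [integral_const, probReal_univ]; simp
    -- mean of g
    have hRint : Integrable (fun z => F z) R := mcd_integrable_of_bdd hFm M hFb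
    have hgmean : ∫ y, g y ∂P' = m := by
      rw [hmF, integral_prod_symm _ hRint]
    -- the main chain
    have hCb : ∀ z : E 0 × (∀ j, E (Fin.succAbove 0 j)),
        |Real.exp (t * (F z - m))| ≤ Real.exp (|t| * (M + M)) := by
      intro z
      rw [abs_of_nonneg (Real.exp_nonneg _)]
      apply Real.exp_le_exp.mpr
      calc t * (F z - m) ≤ |t * (F z - m)| := le_abs_self _
        _ = |t| * |F z - m| := abs_mul _ _
        _ ≤ |t| * (M + M) := mul_le_mul_of_nonneg_left
            (le_trans (abs_sub _ _) (add_le_add (hFb z) hmb)) (abs_nonneg t)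
    have hexpint : Integrable (fun z => Real.exp (t * (F z - m))) R :=
      mcd_integrable_of_bdd (by fun_prop) _ hCb
    have step1 : ∫ x, Real.exp (t * (f x - m)) ∂P = ∫ z, Real.exp (t * (F z - m)) ∂ R := by
      rw [← htrans (fun z => Real.exp (t * (F z - m)))]
      congr 1
      funext x
      congr 2
      rw [hF_def]
      simp
      exact congrArg f (e.symm_apply_apply x).symm
    have step2 : ∫ z, Real.exp (t * (F z - m)) ∂ R
        = ∫ y, (∫ x0, Real.exp (t * (F (x0, y) - m)) ∂(ν 0)) ∂P' :=
      integral_prod_symm _ hexpint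
    have hpoint : ∀ y, ∫ x0, Real.exp (t * (F (x0, y) - m)) ∂(ν 0)
        ≤ Real.exp (t * (g y - m)) * Real.exp (t ^ 2 * (c 0) ^ 2 / 8) := by
      intro y
      have hsplit : ∀ x0, Real.exp (t * (F (x0, y) - m))
          = Real.exp (t * (g y - m)) * Real.exp (t * (F (x0, y) - g y)) := by
        intro x0
        rw [← Real.exp_add]
        congr 1
        ring
      calc ∫ x0, Real.exp (t * (F (x0, y) - m)) ∂(ν 0)
          = Real.exp (t * (g y - m)) * ∫ x0, Real.exp (t * (F (x0, y) - g y)) ∂(ν 0) := by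
            simp only [hsplit]
            rw [integral_const_mul]
        _ ≤ Real.exp (t * (g y - m)) * Real.exp (t ^ 2 * (c 0) ^ 2 / 8) :=
            mul_le_mul_of_nonneg_left (inner y) (Real.exp_nonneg _)
    have hLHSint : Integrable (fun y => ∫ x0, Real.exp (t * (F (x0, y) - m)) ∂(ν 0)) P' :=
      hexpint.integral_prod_right
    have hRHSint : Integrable
        (fun y => Real.exp (t * (g y - m)) * Real.exp (t ^ 2 * (c 0) ^ 2 / 8)) P' := by
      apply mcd_integrable_of_bdd (by fun_prop)
        (Real.exp (|t| * (M + M)) * Real.exp (t ^ 2 * (c 0) ^ 2 / 8))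
      intro y
      rw [abs_mul, abs_of_nonneg (Real.exp_nonneg _), abs_of_nonneg (Real.exp_nonneg _)]
      apply mul_le_mul_of_nonneg_right _ (Real.exp_nonneg _)
      apply Real.exp_le_exp.mpr
      calc t * (g y - m) ≤ |t * (g y - m)| := le_abs_self _
        _ = |t| * |g y - m| := abs_mul _ _
        _ ≤ |t| * (M + M) := mul_le_mul_of_nonneg_left
            (le_trans (abs_sub _ _) (add_le_add (hgb y) hmb)) (abs_nonneg t)
    have step3 : ∫ y, (∫ x0, Real.exp (t * (F (x0, y) - m)) ∂(ν 0)) ∂P'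
        ≤ Real.exp (t ^ 2 * (c 0) ^ 2 / 8) * ∫ y, Real.exp (t * (g y - m)) ∂P' := by
      calc ∫ y, (∫ x0, Real.exp (t * (F (x0, y) - m)) ∂(ν 0)) ∂P'
          ≤ ∫ y, Real.exp (t * (g y - m)) * Real.exp (t ^ 2 * (c 0) ^ 2 / 8) ∂P' :=
            integral_mono hLHSint hRHSint hpoint
        _ = Real.exp (t ^ 2 * (c 0) ^ 2 / 8) * ∫ y, Real.exp (t * (g y - m)) ∂P' := by
            rw [integral_mul_const]; ring
    have hIH := ih (fun j => E (Fin.succAbove 0 j)) (fun j => inst _) ν'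
      (fun j => hν _) g hgm (fun j => c (Fin.succAbove 0 j)) hgbdd t
    rw [hgmean] at hIH
    have step4 : ∫ y, Real.exp (t * (g y - m)) ∂P'
        ≤ Real.exp (t ^ 2 * (∑ j, c (Fin.succAbove 0 j) ^ 2) / 8) := hIH
    have hsum : ∑ i, c i ^ 2 = c 0 ^ 2 + ∑ j, c (Fin.succAbove 0 j) ^ 2 :=
      Fin.sum_univ_succAbove (fun i => c i ^ 2) 0
    calc ∫ x, Real.exp (t * (f x - m)) ∂P
        = ∫ y, (∫ x0, Real.exp (t * (F (x0, y) - m)) ∂(ν 0)) ∂P' := by rw [step1, step2]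
      _ ≤ Real.exp (t ^ 2 * (c 0) ^ 2 / 8) * ∫ y, Real.exp (t * (g y - m)) ∂P' := step3
      _ ≤ Real.exp (t ^ 2 * (c 0) ^ 2 / 8)
            * Real.exp (t ^ 2 * (∑ j, c (Fin.succAbove 0 j) ^ 2) / 8) :=
          mul_le_mul_of_nonneg_left step4 (Real.exp_nonneg _)
      _ = Real.exp (t ^ 2 * (∑ i, c i ^ 2) / 8) := by
          rw [← Real.exp_add, hsum]; ring_nf

lemma mcd_tail_bound {n : ℕ} (E : Fin n → Type u) (inst : ∀ i, MeasurableSpace (E i))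
    (ν : ∀ i, @Measure (E i) (inst i)) (hν : ∀ i, IsProbabilityMeasure (ν i))
    (f : (∀ i, E i) → ℝ) (hf : Measurable f) (c : Fin n → ℝ)
    (hbdd : ∀ (i : Fin n) (x : ∀ j, E j) (x' : E i),
      |f x - f (Function.update x i x')| ≤ c i)
    (ε : ℝ) (hε : 0 < ε) (hS : 0 < ∑ i, c i ^ 2) :
    ((Measure.pi ν) {x | ε < f x - ∫ y, f y ∂(Measure.pi ν)}).toReal
      ≤ Real.exp (-2 * ε ^ 2 / ∑ i, c i ^ 2) := by
  haveI : ∀ i, IsProbabilityMeasure (ν i) := hν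
  set P := Measure.pi ν with hP_def
  set S := ∑ i, c i ^ 2 with hS_def
  set t := 4 * ε / S with ht_def
  have ht : 0 < t := by positivity
  set m := ∫ y, f y ∂P with hm_def
  have hmgf := mcd_mgf_pi n E inst ν hν f hf c hbdd t
  rw [← hm_def] at hmgf
  -- boundedness of f
  obtain ⟨x₀⟩ : Nonempty (∀ i, E i) := mcd_nonempty_of_prob P
  have hosc := mcd_osc_bound f c hbdd
  set M : ℝ := |f x₀| + ∑ i, c i with hM_def
  have hfb : ∀ x, |f x| ≤ M := by
    intro x
    have h1 := hosc x x₀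
    have h2 : |f x| ≤ |f x - f x₀| + |f x₀| := by
      have := abs_add_le (f x - f x₀) (f x₀); simpa using this
    rw [hM_def]; linarith
  have hint : Integrable (fun x => Real.exp (t * (f x - m))) P := by
    apply mcd_integrable_of_bdd (by fun_prop) (Real.exp (|t| * (M + |m|)))
    intro x
    rw [abs_of_nonneg (Real.exp_nonneg _)]
    apply Real.exp_le_exp.mpr
    calc t * (f x - m) ≤ |t * (f x - m)| := le_abs_self _
      _ = |t| * |f x - m| := abs_mul _ _
      _ ≤ |t| * (M + |m|) := mul_le_mul_of_nonneg_left
          (le_trans (abs_sub _ _) (add_le_add (hfb x) le_rfl)) (abs_nonneg t)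
  have hsub : {x | ε < f x - m} ⊆ {x | Real.exp (t * ε) ≤ Real.exp (t * (f x - m))} := by
    intro x hx
    simp only [Set.mem_setOf_eq] at *
    apply Real.exp_le_exp.mpr
    nlinarith
  have hmarkov := mul_meas_ge_le_integral_of_nonneg
    (Filter.Eventually.of_forall (fun x => Real.exp_nonneg (t * (f x - m)))) hint
    (Real.exp (t * ε))
  have h1 : (P {x | ε < f x - m}).toReal
      ≤ (P {x | Real.exp (t * ε) ≤ Real.exp (t * (f x - m))}).toReal :=
    ENNReal.toReal_mono (measure_ne_top _ _) (measure_mono hsub)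
  have h2 : Real.exp (t * ε) * (P {x | Real.exp (t * ε) ≤ Real.exp (t * (f x - m))}).toReal
      ≤ Real.exp (t ^ 2 * S / 8) := le_trans hmarkov hmgf
  have h3 : (P {x | ε < f x - m}).toReal ≤ Real.exp (t ^ 2 * S / 8) / Real.exp (t * ε) := by
    rw [le_div_iff₀ (Real.exp_pos _)]
    calc (P {x | ε < f x - m}).toReal * Real.exp (t * ε)
        ≤ (P {x | Real.exp (t * ε) ≤ Real.exp (t * (f x - m))}).toReal * Real.exp (t * ε) :=
          mul_le_mul_of_nonneg_right h1 (Real.exp_nonneg _)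
      _ = Real.exp (t * ε) * (P {x | Real.exp (t * ε) ≤ Real.exp (t * (f x - m))}).toReal :=
          mul_comm _ _
      _ ≤ Real.exp (t ^ 2 * S / 8) := h2
  have h4 : Real.exp (t ^ 2 * S / 8) / Real.exp (t * ε) = Real.exp (-2 * ε ^ 2 / S) := by
    rw [← Real.exp_sub]
    congr 1
    rw [ht_def]
    field_simp
    ring
  rw [h4] at h3
  exact h3

lemma mcd_map_joint {n : ℕ} {Ω : Type*} [MeasurableSpace Ω]
    (μ : Measure Ω) [IsProbabilityMeasure μ]
    {E : Fin n → Type*} [mE : ∀ i, MeasurableSpace (E i)]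
    (X : ∀ i, Ω → E i) (hXm : ∀ i, Measurable (X i))
    (hXindep : ProbabilityTheory.iIndepFun X μ) :
    μ.map (fun ω i => X i ω) = Measure.pi (fun i => μ.map (X i)) := by
  haveI : ∀ i, IsProbabilityMeasure (μ.map (X i)) := fun i =>
    Measure.isProbabilityMeasure_map (hXm i).aemeasurable
  refine (Measure.pi_eq fun s hs => ?_).symm
  rw [Measure.map_apply (measurable_pi_iff.mpr hXm) (MeasurableSet.univ_pi hs)]
  have hpre : (fun ω i => X i ω) ⁻¹' Set.pi Set.univ s = ⋂ i ∈ Finset.univ, X i ⁻¹' s i := by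
    ext ω
    simp [Set.mem_univ_pi]
  rw [hpre, hXindep.measure_inter_preimage_eq_mul Finset.univ (fun i _ => hs i)]
  exact Finset.prod_congr rfl fun i _ => (Measure.map_apply (hXm i) (hs i)).symm

/-- McDiarmid's bounded differences inequality: if `X_1, …, X_n` are
independent random variables and `f` changes by at most `c i` when the `i`-th
coordinate is changed, then for every `ε > 0`,
`P(|f(X) − E[f(X)]| > ε) < 2 exp(−ε² / ∑ c i²)`. -/
theorem mcdiarmid_inequality {n : ℕ} {Ω : Type*} [MeasurableSpace Ω]
    (μ : Measure Ω) [IsProbabilityMeasure μ]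
    {E : Fin n → Type*} [mE : ∀ i, MeasurableSpace (E i)]
    (X : ∀ i, Ω → E i) (hXm : ∀ i, Measurable (X i))
    (hXindep : ProbabilityTheory.iIndepFun X μ)
    (f : (∀ i, E i) → ℝ) (hf : Measurable f)
    (c : Fin n → ℝ)
    (hbdd : ∀ (i : Fin n) (x : ∀ j, E j) (x' : E i),
      |f x - f (Function.update x i x')| ≤ c i)
    (ε : ℝ) (hε : 0 < ε) :
    (μ { ω | ε < |f (fun i => X i ω) - ∫ ω', f (fun i => X i ω') ∂μ| }).toReal
      < 2 * Real.exp (-ε ^ 2 / ∑ i, c i ^ 2) := by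
  haveI : ∀ i, IsProbabilityMeasure (μ.map (X i)) := fun i =>
    Measure.isProbabilityMeasure_map (hXm i).aemeasurable
  set ν := fun i => μ.map (X i) with hν_def
  set P := Measure.pi ν with hP_def
  have hXmeas : Measurable (fun ω i => X i ω) := measurable_pi_iff.mpr hXm
  have hmap : μ.map (fun ω i => X i ω) = P := mcd_map_joint μ X hXm hXindep
  set m := ∫ x, f x ∂P with hm_def
  have hm_eq : ∫ ω', f (fun i => X i ω') ∂μ = m := by
    rw [hm_def, ← hmap, integral_map hXmeas.aemeasurable hf.aestronglyMeasurable]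
  rw [hm_eq]
  have hsetm : MeasurableSet {x : ∀ i, E i | ε < |f x - m|} :=
    measurableSet_lt measurable_const (hf.sub measurable_const).abs
  have hset : μ {ω | ε < |f (fun i => X i ω) - m|} = P {x | ε < |f x - m|} := by
    rw [← hmap, Measure.map_apply hXmeas hsetm]
    rfl
  rw [hset]
  set S := ∑ i, c i ^ 2 with hS_def
  obtain ⟨x₀⟩ : Nonempty (∀ i, E i) := mcd_nonempty_of_prob P
  have hc0 : ∀ i, 0 ≤ c i := fun i => by
    have := hbdd i x₀ (x₀ i)
    simpa using this
  have hS0 : 0 ≤ S := Finset.sum_nonneg fun i _ => sq_nonneg _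
  rcases eq_or_lt_of_le hS0 with hS | hS
  · -- S = 0 : f is constant
    have hc : ∀ i, c i = 0 := by
      intro i
      have h1 : ∀ j ∈ Finset.univ, (0:ℝ) ≤ c j ^ 2 := fun j _ => sq_nonneg _
      have h2 := (Finset.sum_eq_zero_iff_of_nonneg h1).mp hS.symm i (Finset.mem_univ i)
      exact (pow_eq_zero_iff (by norm_num : (2:ℕ) ≠ 0)).mp h2
    have hconst : ∀ x, f x = f x₀ := by
      intro x
      have := mcd_osc_bound f c hbdd x x₀
      rw [Finset.sum_congr rfl (fun i _ => hc i)] at this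
      simp at this
      linarith [this]
    have hmc : m = f x₀ := by
      rw [hm_def]
      have h1 : (fun x => f x) = fun _ => f x₀ := funext hconst
      rw [h1, integral_const, probReal_univ]
      simp
    have hempty : {x : ∀ i, E i | ε < |f x - m|} = ∅ := by
      ext x
      simp only [Set.mem_setOf_eq, Set.mem_empty_iff_false, iff_false, not_lt]
      rw [hconst x, hmc]
      simpa using le_of_lt hε
    rw [hempty]
    simp only [measure_empty, ENNReal.toReal_zero]
    positivity
  · -- S > 0
    have upper := mcd_tail_bound E mE ν (fun i => inferInstance) f hf c hbdd ε hε hS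
    have hbddneg : ∀ (i : Fin n) (x : ∀ j, E j) (x' : E i),
        |(fun z => -f z) x - (fun z => -f z) (Function.update x i x')| ≤ c i := by
      intro i x x'
      simp only
      rw [show -f x - -f (Function.update x i x') = -(f x - f (Function.update x i x')) by ring,
        abs_neg]
      exact hbdd i x x'
    have lower0 := mcd_tail_bound E mE ν (fun i => inferInstance) (fun z => -f z) hf.neg c
      hbddneg ε hε hS
    have hnegint : ∫ y, -f y ∂P = -m := by
      rw [integral_neg, hm_def]
    have hlsets : {x : ∀ i, E i | ε < -f x - ∫ y, -f y ∂(Measure.pi ν)}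
        = {x | ε < m - f x} := by
      ext x
      simp only [Set.mem_setOf_eq]
      rw [show (Measure.pi ν : Measure _) = P from rfl, hnegint]
      constructor <;> intro h <;> linarith
    rw [hlsets] at lower0
    have hsubU : {x : ∀ i, E i | ε < |f x - m|}
        ⊆ {x | ε < f x - m} ∪ {x | ε < m - f x} := by
      intro x hx
      simp only [Set.mem_setOf_eq, Set.mem_union] at *
      rcases lt_abs.mp hx with h | h
      · exact Or.inl h
      · exact Or.inr (by linarith)
    have hA : (P {x : ∀ i, E i | ε < f x - m}).toReal ≤ Real.exp (-2 * ε ^ 2 / S) := upper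
    have hB : (P {x : ∀ i, E i | ε < m - f x}).toReal ≤ Real.exp (-2 * ε ^ 2 / S) := lower0
    have hUB : (P {x : ∀ i, E i | ε < |f x - m|}).toReal
        ≤ (P {x : ∀ i, E i | ε < f x - m}).toReal + (P {x : ∀ i, E i | ε < m - f x}).toReal := by
      calc (P {x : ∀ i, E i | ε < |f x - m|}).toReal
          ≤ (P ({x : ∀ i, E i | ε < f x - m} ∪ {x | ε < m - f x})).toReal :=
            ENNReal.toReal_mono (measure_ne_top _ _) (measure_mono hsubU)
        _ ≤ (P {x : ∀ i, E i | ε < f x - m} + P {x | ε < m - f x}).toReal :=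
            ENNReal.toReal_mono (by finiteness) (measure_union_le _ _)
        _ = (P {x : ∀ i, E i | ε < f x - m}).toReal + (P {x | ε < m - f x}).toReal :=
            ENNReal.toReal_add (measure_ne_top _ _) (measure_ne_top _ _)
    have hstrict : Real.exp (-2 * ε ^ 2 / S) < Real.exp (-ε ^ 2 / S) := by
      apply Real.exp_lt_exp.mpr
      have hpos : 0 < ε ^ 2 / S := by positivity
      have e1 : -2 * ε ^ 2 / S = -(2 * (ε ^ 2 / S)) := by ring
      have e2 : -ε ^ 2 / S = -(ε ^ 2 / S) := by ring
      rw [e1, e2]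
      linarith
    calc (P {x : ∀ i, E i | ε < |f x - m|}).toReal
        ≤ (P {x : ∀ i, E i | ε < f x - m}).toReal + (P {x | ε < m - f x}).toReal := hUB
      _ ≤ Real.exp (-2 * ε ^ 2 / S) + Real.exp (-2 * ε ^ 2 / S) := add_le_add hA hB
      _ = 2 * Real.exp (-2 * ε ^ 2 / S) := by ring
      _ < 2 * Real.exp (-ε ^ 2 / S) := by linarith
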